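/- For every ε with 0 < ε < 1/2 there exists a unary MA-PostQFA M (certificate and input alphabet both {a}) such that: a(c,x)+r(c,x) > 0 for all certificates and inputs; for every i ≥ 0, on certificate a^i and input a^(i²) the acceptance probability of M is 1; and for every n that is not a perfect square and every i ≥ 0, on certificate a^i and input a^n the rejection probability of M is at least 1−ε. Hence M verifies USQUARE = { a^(i²) : i ≥ 0 } with bounded error using certificates of length √n for members. -/

import Mathlib

open Matrix

/-- A superoperator on `ℂ^m`: a finite family of `m×m` complex matrices `E_1,…,E_k`
with `∑ j, E_jᴴ E_j = I`. -/
structure Superop (m : ℕ) where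
  k : ℕ
  E : Fin k → Matrix (Fin m) (Fin m) ℂ
  valid : ∑ j, (E j)ᴴ * E j = 1

/-- Action of a superoperator on a density matrix: `ρ ↦ ∑ j, E_j ρ E_jᴴ`. -/
noncomputable def Superop.app {m : ℕ} (S : Superop m) (ρ : Matrix (Fin m) (Fin m) ℂ) :
    Matrix (Fin m) (Fin m) ℂ :=
  ∑ j, S.E j * ρ * (S.E j)ᴴ

/-- The initial density matrix `e₁ e₁†`. -/
def rho0 (m : ℕ) : Matrix (Fin m) (Fin m) ℂ :=
  Matrix.of fun j j' => if j.val = 0 ∧ j'.val = 0 then 1 else 0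

/-- An MA-PostQFA whose certificate and input symbols range over the type `Sym`:
superoperators for the markers `◐, ◑, ¢, $` and for each symbol, together with disjoint
sets of postselecting accepting and rejecting states. -/
structure MAPostQFA (Sym : Type) where
  m : ℕ
  Eopen : Superop m
  Eclose : Superop m
  Ecent : Superop m
  Edollar : Superop m
  Esym : Sym → Superop m
  Qacc : Finset (Fin m)
  Qrej : Finset (Fin m)
  disj : Disjoint Qacc Qrej

namespace MAPostQFA

variable {Sym : Type}

/-- The final density matrix on certificate `c` and input `x`: apply
`E_◐, E_{c_1}, …, E_{c_k}, E_◑, E_¢, E_{x_1}, …, E_{x_l}, E_$` in order to `ρ₀`. -/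
noncomputable def finalRho (M : MAPostQFA Sym) (c x : List Sym) : Matrix (Fin M.m) (Fin M.m) ℂ :=
  M.Edollar.app <|
    x.foldl (fun ρ s => (M.Esym s).app ρ) <|
      M.Ecent.app <| M.Eclose.app <|
        c.foldl (fun ρ s => (M.Esym s).app ρ) (M.Eopen.app (rho0 M.m))

/-- `a(c,x)`: total final weight on the postselecting accepting states. -/
noncomputable def aPr (M : MAPostQFA Sym) (c x : List Sym) : ℝ :=
  ∑ j ∈ M.Qacc, (M.finalRho c x j j).re

/-- `r(c,x)`: total final weight on the postselecting rejecting states. -/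
noncomputable def rPr (M : MAPostQFA Sym) (c x : List Sym) : ℝ :=
  ∑ j ∈ M.Qrej, (M.finalRho c x j j).re

/-- Acceptance probability `a/(a+r)` after postselection. -/
noncomputable def accProb (M : MAPostQFA Sym) (c x : List Sym) : ℝ :=
  M.aPr c x / (M.aPr c x + M.rPr c x)

/-- Rejection probability `r/(a+r)` after postselection. -/
noncomputable def rejProb (M : MAPostQFA Sym) (c x : List Sym) : ℝ :=
  M.rPr c x / (M.aPr c x + M.rPr c x)

end MAPostQFA

namespace USQ
noncomputable section
open Complex Finset

abbrev emb (i : Fin 6) : Fin 12 := Fin.castLE (by norm_num) i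

def E1 (col : Fin 6 → Fin 12 → ℂ) : Matrix (Fin 12) (Fin 12) ℂ :=
  fun r c => if h : (c : ℕ) < 6 then col ⟨c, h⟩ r else 0

def E2 (d : Fin 6 → ℝ) : Matrix (Fin 12) (Fin 12) ℂ :=
  fun r c => if h : (c : ℕ) < 6 then
      (if (r : ℕ) = (c : ℕ) + 6 then ((Real.sqrt (1 - d ⟨c, h⟩) : ℝ) : ℂ) else 0) else 0

def E3 : Matrix (Fin 12) (Fin 12) ℂ :=
  fun r c => if 6 ≤ (c : ℕ) ∧ r = c then 1 else 0

def mk (col : Fin 6 → Fin 12 → ℂ) (d : Fin 6 → ℝ) (hd : ∀ c, d c ≤ 1)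
    (h : ∀ c c' : Fin 6, ∑ r, (starRingEnd ℂ) (col c r) * col c' r
      = if c = c' then ((d c : ℝ) : ℂ) else 0) : Superop 12 where
  k := 3
  E := ![E1 col, E2 d, E3]
  valid := by
    ext c c'
    rw [Fin.sum_univ_three]
    simp only [Matrix.cons_val_zero, Matrix.cons_val_one, Matrix.head_cons,
      Matrix.cons_val_two, Matrix.tail_cons, Matrix.add_apply]
    have hE1 : (((E1 col)ᴴ) * (E1 col)) c c'
        = if hc : (c:ℕ) < 6 then (if hc' : (c':ℕ) < 6 then
            ∑ r, (starRingEnd ℂ) (col ⟨c, hc⟩ r) * col ⟨c', hc'⟩ r else 0) else 0 := by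
      by_cases hc : (c:ℕ) < 6 <;> by_cases hc' : (c':ℕ) < 6 <;>
        simp [Matrix.mul_apply, E1, Matrix.conjTranspose_apply, hc, hc']
    have hE2 : (((E2 d)ᴴ) * (E2 d)) c c'
        = if hc : (c:ℕ) < 6 then (if c = c' then ((1 - d ⟨c, hc⟩ : ℝ) : ℂ) else 0) else 0 := by
      by_cases hc : (c:ℕ) < 6
      · by_cases hcc : c = c'
        · subst hcc
          have hx : (0:ℝ) ≤ 1 - d ⟨(c:ℕ), hc⟩ := by linarith [hd ⟨(c:ℕ), hc⟩]
          rw [Matrix.mul_apply]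
          rw [Finset.sum_eq_single (⟨(c:ℕ) + 6, by omega⟩ : Fin 12)]
          · rw [dif_pos hc, if_pos rfl]
            simp only [E2, Matrix.conjTranspose_apply, hc, dif_pos]
            simp [Complex.conj_ofReal, ← Complex.ofReal_mul, Real.mul_self_sqrt hx]
          · intro b _ hb
            simp only [E2, Matrix.conjTranspose_apply, hc, dif_pos]
            rw [if_neg (fun hh => hb (Fin.ext (by simpa using hh)))]
            simp
          · simp
        · have hz : (((E2 d)ᴴ) * (E2 d)) c c' = 0 := by
            rw [Matrix.mul_apply]
            apply Finset.sum_eq_zero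
            intro b _
            simp only [E2, Matrix.conjTranspose_apply]
            by_cases hc' : (c':ℕ) < 6
            · rw [dif_pos hc, dif_pos hc']
              by_cases h1 : (b:ℕ) = (c:ℕ) + 6
              · have h2 : ¬ (b:ℕ) = (c':ℕ) + 6 := by
                  intro h2
                  apply hcc
                  apply Fin.ext
                  omega
                rw [if_neg h2]; simp
              · rw [if_neg h1]; simp
            · rw [dif_neg hc']; simp
          rw [hz, dif_pos hc, if_neg hcc]
      · have hz : (((E2 d)ᴴ) * (E2 d)) c c' = 0 := by
          rw [Matrix.mul_apply]
          apply Finset.sum_eq_zero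
          intro b _
          simp [E2, Matrix.conjTranspose_apply, hc]
        rw [hz, dif_neg hc]
    have hE3 : ((E3ᴴ) * E3) c c'
        = if 6 ≤ (c:ℕ) then (if c = c' then 1 else 0) else 0 := by
      by_cases hc : 6 ≤ (c:ℕ)
      · by_cases hcc : c = c'
        · subst hcc
          rw [Matrix.mul_apply, Finset.sum_eq_single c]
          · simp [E3, Matrix.conjTranspose_apply, hc]
          · intro b _ hb; simp [E3, Matrix.conjTranspose_apply, hb]
          · simp
        · have hz : ((E3ᴴ) * E3) c c' = 0 := by
            rw [Matrix.mul_apply]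
            apply Finset.sum_eq_zero
            intro b _
            simp only [E3, Matrix.conjTranspose_apply]
            by_cases h1 : b = c
            · subst h1
              rw [if_neg (fun hh : 6 ≤ (c':ℕ) ∧ b = c' => hcc hh.2)]
              simp
            · rw [if_neg (fun hh : 6 ≤ (c:ℕ) ∧ b = c => h1 hh.2)]
              simp
          rw [hz, if_pos hc, if_neg hcc]
      · have hz : ((E3ᴴ) * E3) c c' = 0 := by
          rw [Matrix.mul_apply]
          apply Finset.sum_eq_zero
          intro b _
          simp only [E3, Matrix.conjTranspose_apply]
          rw [if_neg (fun hh : 6 ≤ (c:ℕ) ∧ b = c => hc hh.1)]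
          simp
        rw [hz, if_neg hc]
    rw [hE1, hE2, hE3]
    by_cases hcc : c = c'
    · subst hcc
      by_cases hc : (c:ℕ) < 6
      · rw [dif_pos hc, dif_pos hc, dif_pos hc, h, if_pos rfl, if_pos rfl,
          if_neg (by omega), Matrix.one_apply_eq]
        push_cast; ring
      · rw [dif_neg hc, dif_neg hc, if_pos (by omega), if_pos rfl, Matrix.one_apply_eq]
        ring
    · rw [Matrix.one_apply_ne hcc]
      by_cases hc : (c:ℕ) < 6 <;> by_cases hc' : (c':ℕ) < 6
      · have h6 : (⟨(c:ℕ), hc⟩ : Fin 6) ≠ ⟨(c':ℕ), hc'⟩ := by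
          intro hh
          exact hcc (Fin.ext (by simpa using congrArg Fin.val hh))
        rw [dif_pos hc, dif_pos hc', dif_pos hc, h, if_neg h6, if_neg hcc, if_neg (by omega)]
        ring
      · rw [dif_pos hc, dif_neg hc', dif_pos hc, if_neg hcc, if_neg (by omega)]; ring
      · rw [dif_neg hc, dif_neg hc, if_pos (by omega), if_neg hcc]; ring
      · rw [dif_neg hc, dif_neg hc, if_pos (by omega), if_neg hcc]; ring


lemma sum12 (f : Fin 12 → ℂ) (hf : ∀ a : Fin 12, ¬ (a : ℕ) < 6 → f a = 0) :
    ∑ a, f a = ∑ a : Fin 6, f (emb a) := by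
  have h := Fin.sum_univ_add (f := fun a : Fin (6 + 6) => f a)
  rw [show ∑ a : Fin 12, f a = ∑ a : Fin (6+6), f a from rfl, h]
  have h2 : ∀ a : Fin 6, f (Fin.natAdd 6 a) = 0 := fun a => hf _ (by simp [Fin.natAdd])
  simp only [h2, Finset.sum_const_zero, add_zero]
  exact Finset.sum_congr rfl fun a _ => by congr 1

lemma E1_at (col : Fin 6 → Fin 12 → ℂ) (a : Fin 6) (w : Fin 12) :
    E1 col w (emb a) = col a w := by
  simp only [E1]
  rw [dif_pos (show ((emb a : Fin 12) : ℕ) < 6 from a.isLt)]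
  have ha : (⟨((emb a : Fin 12) : ℕ), a.isLt⟩ : Fin 6) = a := Fin.ext rfl
  rw [ha]

lemma mk_app (col : Fin 6 → Fin 12 → ℂ) (d : Fin 6 → ℝ) (hd) (h)
    (ρ : Matrix (Fin 12) (Fin 12) ℂ) (v : Fin 6 → ℂ)
    (hρ : ∀ i j : Fin 6, ρ (emb i) (emb j) = v i * (starRingEnd ℂ) (v j))
    (i j : Fin 6) :
    ((mk col d hd h).app ρ) (emb i) (emb j)
      = (∑ a, col a (emb i) * v a) * (starRingEnd ℂ) (∑ b, col b (emb j) * v b) := by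
  have hlt : ∀ i : Fin 6, ((emb i : Fin 12) : ℕ) < 6 := fun i => i.isLt
  have happ : Superop.app (mk col d hd h) ρ
      = E1 col * ρ * (E1 col)ᴴ + E2 d * ρ * (E2 d)ᴴ + E3 * ρ * E3ᴴ := by
    rw [Superop.app]
    exact Fin.sum_univ_three (f := fun jj : Fin 3 =>
      (![E1 col, E2 d, E3] : Fin 3 → Matrix (Fin 12) (Fin 12) ℂ) jj * ρ
        * ((![E1 col, E2 d, E3] : Fin 3 → Matrix (Fin 12) (Fin 12) ℂ) jj)ᴴ)
  rw [happ, Matrix.add_apply, Matrix.add_apply]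
  have h2 : (E2 d * ρ * (E2 d)ᴴ) (emb i) (emb j) = 0 := by
    rw [Matrix.mul_apply]
    apply Finset.sum_eq_zero
    intro b _
    rw [Matrix.mul_apply, Finset.sum_eq_zero, zero_mul]
    intro a _
    have hz : E2 d (emb i) a = 0 := by
      simp only [E2]
      by_cases ha : (a : ℕ) < 6
      · rw [dif_pos ha, if_neg (by have := hlt i; omega)]
      · rw [dif_neg ha]
    rw [hz, zero_mul]
  have h3 : (E3 * ρ * E3ᴴ) (emb i) (emb j) = 0 := by
    rw [Matrix.mul_apply]
    apply Finset.sum_eq_zero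
    intro b _
    rw [Matrix.mul_apply, Finset.sum_eq_zero, zero_mul]
    intro a _
    have hz : E3 (emb i) a = 0 := by
      simp only [E3]
      rw [if_neg]
      rintro ⟨h6, rfl⟩
      exact absurd (hlt i) (by omega)
    rw [hz, zero_mul]
  rw [h2, h3, add_zero, add_zero]
  have hrow : ∀ w : Fin 12, (E1 col * ρ) (emb i) w
      = ∑ a : Fin 6, col a (emb i) * ρ (emb a) w := by
    intro w
    rw [Matrix.mul_apply]
    rw [sum12 _ (fun a ha => by simp only [E1]; rw [dif_neg ha, zero_mul])]
    exact Finset.sum_congr rfl fun a _ => by rw [E1_at col a]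
  rw [Matrix.mul_apply]
  rw [sum12 _ (fun b hb => by
    have hz : E1 col (emb j) b = 0 := by simp only [E1]; rw [dif_neg hb]
    rw [Matrix.conjTranspose_apply, hz, star_zero, mul_zero])]
  have step : ∀ b : Fin 6, (E1 col * ρ) (emb i) (emb b) * ((E1 col)ᴴ) (emb b) (emb j)
      = ((∑ a, col a (emb i) * v a) * (starRingEnd ℂ) (v b)) * (starRingEnd ℂ) (col b (emb j)) := by
    intro b
    rw [Matrix.conjTranspose_apply, E1_at col b, hrow]
    congr 1
    rw [Finset.sum_mul]
    apply Finset.sum_congr rfl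
    intro a _
    rw [hρ a b]
    ring
  rw [Finset.sum_congr rfl (fun b _ => step b)]
  rw [map_sum, Finset.mul_sum]
  apply Finset.sum_congr rfl
  intro b _
  rw [_root_.map_mul]
  ring


/-- identity superoperator -/
def idS : Superop 12 where
  k := 1
  E := ![1]
  valid := by
    rw [Fin.sum_univ_one]
    simp

lemma id_app (ρ : Matrix (Fin 12) (Fin 12) ℂ) : idS.app ρ = ρ := by
  rw [Superop.app]
  have h := Fin.sum_univ_one (f := fun j : Fin 1 =>
    (![1] : Fin 1 → Matrix (Fin 12) (Fin 12) ℂ) j * ρ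
      * ((![1] : Fin 1 → Matrix (Fin 12) (Fin 12) ℂ) j)ᴴ)
  refine h.trans ?_
  simp

/-! ### concrete tables -/

def symTab : ℕ → ℕ → ℝ := fun c r =>
  if c = 0 then (if r = 0 then 1 else if r = 1 then 1 else if r = 2 then 1
      else if r = 6 then 3 else if r = 7 then 1 else 0)
  else if c = 1 then (if r = 1 then 1 else if r = 2 then 2 else if r = 6 then -1
      else if r = 8 then 2 else 0)
  else if c = 2 then (if r = 2 then 1 else if r = 7 then -1 else if r = 8 then -1 else 0)
  else if c = 3 then (if r = 3 then 1 else if r = 5 then 1 else if r = 9 then 1 else 0)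
  else if c = 4 then (if r = 4 then 1 else 0)
  else (if r = 5 then 1 else if r = 9 then -1 else 0)

def dSymTab : ℕ → ℝ := fun c =>
  if c = 0 then 13/16 else if c = 1 then 10/16 else if c = 2 then 3/16
  else if c = 3 then 3/16 else if c = 4 then 1/16 else 2/16

def closeTab : ℕ → ℕ → ℝ := fun c r =>
  if c = 0 then (if r = 3 then 1 else 0)
  else if c = 2 then (if r = 4 then 1 else 0)
  else 0

def dCloseTab : ℕ → ℝ := fun c => if c = 0 then 1 else if c = 2 then 1 else 0

def dollarTab (ε : ℝ) : ℕ → ℕ → ℝ := fun c r =>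
  if c = 3 then (if r = 0 then Real.sqrt ε / 2 else 0)
  else if c = 4 then (if r = 1 then -(1/2) else if r = 6 then 1/2 else 0)
  else if c = 5 then (if r = 1 then 1/2 else if r = 6 then 1/2 else 0)
  else 0

def dDollarTab (ε : ℝ) : ℕ → ℝ := fun c =>
  if c = 3 then ε/4 else if c = 4 then 1/2 else if c = 5 then 1/2 else 0

def colOf (t : ℕ → ℕ → ℝ) : Fin 6 → Fin 12 → ℂ := fun c r => ((t c.val r.val : ℝ) : ℂ)
def dOf (t : ℕ → ℝ) : Fin 6 → ℝ := fun c => t c.val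

/-- reduce the complex orthogonality condition to a real one -/
lemma h_of_real (t : ℕ → ℕ → ℝ) (dt : ℕ → ℝ)
    (hr : ∀ c c' : Fin 6, ∑ r ∈ Finset.range 12, t c.val r * t c'.val r
        = if c = c' then dt c.val else 0) :
    ∀ c c' : Fin 6, ∑ r, (starRingEnd ℂ) (colOf t c r) * colOf t c' r
      = if c = c' then ((dOf dt c : ℝ) : ℂ) else 0 := by
  intro c c'
  have h1 : ∑ r : Fin 12, (starRingEnd ℂ) (colOf t c r) * colOf t c' r
      = ((∑ r : Fin 12, t c.val (r : ℕ) * t c'.val (r : ℕ) : ℝ) : ℂ) := by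
    rw [Complex.ofReal_sum]
    exact Finset.sum_congr rfl fun r _ => by
      simp [colOf, Complex.conj_ofReal, ← Complex.ofReal_mul]
  rw [h1, Fin.sum_univ_eq_sum_range (fun r => t c.val r * t c'.val r) 12, hr c c']
  split <;> simp [dOf]

lemma fv0 : ((0 : Fin 6) : ℕ) = 0 := rfl
lemma fv1 : ((1 : Fin 6) : ℕ) = 1 := rfl
lemma fv2 : ((2 : Fin 6) : ℕ) = 2 := rfl
lemma fv3 : ((3 : Fin 6) : ℕ) = 3 := rfl
lemma fv4 : ((4 : Fin 6) : ℕ) = 4 := rfl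
lemma fv5 : ((5 : Fin 6) : ℕ) = 5 := rfl

set_option maxHeartbeats 2000000 in
lemma hr_sym : ∀ c c' : Fin 6, ∑ r ∈ Finset.range 12,
    ((1:ℝ)/4 * symTab c.val r) * ((1:ℝ)/4 * symTab c'.val r)
      = if c = c' then dSymTab c.val else 0 := by
  intro c c'
  have hcc : (c = c') ↔ (c.val = c'.val) := Fin.ext_iff
  rw [if_congr hcc rfl rfl]
  fin_cases c <;> fin_cases c' <;>
    norm_num [Finset.sum_range_succ, symTab, dSymTab]

set_option maxHeartbeats 2000000 in
lemma hr_close : ∀ c c' : Fin 6, ∑ r ∈ Finset.range 12,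
    closeTab c.val r * closeTab c'.val r
      = if c = c' then dCloseTab c.val else 0 := by
  intro c c'
  have hcc : (c = c') ↔ (c.val = c'.val) := Fin.ext_iff
  rw [if_congr hcc rfl rfl]
  fin_cases c <;> fin_cases c' <;>
    norm_num [Finset.sum_range_succ, closeTab, dCloseTab]

set_option maxHeartbeats 2000000 in
lemma hr_dollar (ε : ℝ) (hε0 : 0 ≤ ε) : ∀ c c' : Fin 6, ∑ r ∈ Finset.range 12,
    dollarTab ε c.val r * dollarTab ε c'.val r
      = if c = c' then dDollarTab ε c.val else 0 := by
  intro c c'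
  have hs : Real.sqrt ε * Real.sqrt ε = ε := Real.mul_self_sqrt hε0
  have hcc : (c = c') ↔ (c.val = c'.val) := Fin.ext_iff
  rw [if_congr hcc rfl rfl]
  fin_cases c <;> fin_cases c' <;>
    norm_num [Finset.sum_range_succ, dollarTab, dDollarTab] <;>
    nlinarith [hs]

/-! ### the three nontrivial superoperators -/

def symS : Superop 12 :=
  mk (colOf (fun c r => 1/4 * symTab c r)) (dOf dSymTab)
    (by intro c; fin_cases c <;> norm_num [dOf, dSymTab])
    (h_of_real _ _ hr_sym)

def closeS : Superop 12 :=
  mk (colOf closeTab) (dOf dCloseTab)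
    (by intro c; fin_cases c <;> norm_num [dOf, dCloseTab])
    (h_of_real _ _ hr_close)

def dollarS (ε : ℝ) (hε0 : 0 ≤ ε) (hε1 : ε ≤ 1) : Superop 12 :=
  mk (colOf (dollarTab ε)) (dOf (dDollarTab ε))
    (by intro c; fin_cases c <;> simp [dOf, dDollarTab] <;> norm_num <;> linarith)
    (h_of_real _ _ (hr_dollar ε hε0))

/-! ### vector evolution -/

def Agrees (ρ : Matrix (Fin 12) (Fin 12) ℂ) (v : Fin 6 → ℂ) : Prop :=
  ∀ i j : Fin 6, ρ (emb i) (emb j) = v i * (starRingEnd ℂ) (v j)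

def γR : ℝ := 1/4

def symStepC (v : Fin 6 → ℂ) : Fin 6 → ℂ := fun r =>
  if r.val = 0 then (γR : ℂ) * v 0
  else if r.val = 1 then (γR : ℂ) * (v 0 + v 1)
  else if r.val = 2 then (γR : ℂ) * (v 0 + 2 * v 1 + v 2)
  else if r.val = 3 then (γR : ℂ) * v 3
  else if r.val = 4 then (γR : ℂ) * v 4
  else (γR : ℂ) * (v 3 + v 5)

def closeStepC (v : Fin 6 → ℂ) : Fin 6 → ℂ := fun r =>
  if r.val = 3 then v 0 else if r.val = 4 then v 2 else 0

def dollarStepC (ε : ℝ) (v : Fin 6 → ℂ) : Fin 6 → ℂ := fun r =>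
  if r.val = 0 then ((Real.sqrt ε / 2 : ℝ) : ℂ) * v 3
  else if r.val = 1 then (1/2 : ℂ) * (v 5 - v 4) else 0

set_option maxHeartbeats 2000000 in
lemma step_sym (v : Fin 6 → ℂ) (i : Fin 6) :
    ∑ a, colOf (fun c r => 1/4 * symTab c r) a (emb i) * v a = symStepC v i := by
  fin_cases i <;>
    · rw [Fin.sum_univ_six]
      norm_num [colOf, symTab, symStepC, γR, fv0, fv1, fv2, fv3, fv4, fv5]
      try ring

set_option maxHeartbeats 2000000 in
lemma step_close (v : Fin 6 → ℂ) (i : Fin 6) :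
    ∑ a, colOf closeTab a (emb i) * v a = closeStepC v i := by
  fin_cases i <;>
    · rw [Fin.sum_univ_six]
      norm_num [colOf, closeTab, closeStepC, fv0, fv1, fv2, fv3, fv4, fv5]

set_option maxHeartbeats 2000000 in
lemma step_dollar (ε : ℝ) (v : Fin 6 → ℂ) (i : Fin 6) :
    ∑ a, colOf (dollarTab ε) a (emb i) * v a = dollarStepC ε v i := by
  fin_cases i <;>
    · rw [Fin.sum_univ_six]
      norm_num [colOf, dollarTab, dollarStepC, fv0, fv1, fv2, fv3, fv4, fv5]
      try ring

/-! ### agreement transfer -/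

lemma agrees_symS {ρ : Matrix (Fin 12) (Fin 12) ℂ} {v : Fin 6 → ℂ} (h : Agrees ρ v) :
    Agrees (symS.app ρ) (symStepC v) := by
  intro i j
  unfold symS
  rw [mk_app _ _ _ _ ρ v h i j, step_sym, step_sym]

lemma agrees_closeS {ρ : Matrix (Fin 12) (Fin 12) ℂ} {v : Fin 6 → ℂ} (h : Agrees ρ v) :
    Agrees (closeS.app ρ) (closeStepC v) := by
  intro i j
  unfold closeS
  rw [mk_app _ _ _ _ ρ v h i j, step_close, step_close]

lemma agrees_dollarS (ε : ℝ) (h0 : 0 ≤ ε) (h1 : ε ≤ 1)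
    {ρ : Matrix (Fin 12) (Fin 12) ℂ} {v : Fin 6 → ℂ} (h : Agrees ρ v) :
    Agrees ((dollarS ε h0 h1).app ρ) (dollarStepC ε v) := by
  intro i j
  unfold dollarS
  rw [mk_app _ _ _ _ ρ v h i j, step_dollar, step_dollar]

/-! ### closed-form vectors -/

def vinit : Fin 6 → ℂ := fun r => if r.val = 0 then 1 else 0

def vcert (l : ℕ) : Fin 6 → ℂ := fun r =>
  if r.val = 0 then ((γR ^ l : ℝ) : ℂ)
  else if r.val = 1 then (((l : ℝ) * γR ^ l : ℝ) : ℂ)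
  else if r.val = 2 then (((l : ℝ)^2 * γR ^ l : ℝ) : ℂ) else 0

def vmid (i : ℕ) : Fin 6 → ℂ := fun r =>
  if r.val = 3 then ((γR ^ i : ℝ) : ℂ)
  else if r.val = 4 then (((i : ℝ)^2 * γR ^ i : ℝ) : ℂ) else 0

def vrun (i n : ℕ) : Fin 6 → ℂ := fun r =>
  if r.val = 3 then ((γR ^ (i+n) : ℝ) : ℂ)
  else if r.val = 4 then (((i : ℝ)^2 * γR ^ (i+n) : ℝ) : ℂ)
  else if r.val = 5 then (((n : ℝ) * γR ^ (i+n) : ℝ) : ℂ) else 0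

def vfin (ε : ℝ) (i n : ℕ) : Fin 6 → ℂ := fun r =>
  if r.val = 0 then ((Real.sqrt ε / 2 * γR ^ (i+n) : ℝ) : ℂ)
  else if r.val = 1 then ((1/2 * ((n:ℝ) - (i:ℝ)^2) * γR ^ (i+n) : ℝ) : ℂ) else 0

lemma iter_cert (l : ℕ) : symStepC^[l] vinit = vcert l := by
  induction l with
  | zero =>
    funext r
    fin_cases r <;> norm_num [vinit, vcert, fv0, fv1, fv2, fv3, fv4, fv5]
  | succ l ih =>
    rw [Function.iterate_succ_apply', ih]
    funext r
    fin_cases r <;>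
      · norm_num [symStepC, vcert, fv0, fv1, fv2, fv3, fv4, fv5]
        try (push_cast; ring)

lemma iter_run (i : ℕ) (n : ℕ) : symStepC^[n] (vmid i) = vrun i n := by
  induction n with
  | zero =>
    funext r
    fin_cases r <;> norm_num [vmid, vrun, fv0, fv1, fv2, fv3, fv4, fv5]
  | succ n ih =>
    rw [Function.iterate_succ_apply', ih]
    funext r
    fin_cases r <;>
      · norm_num [symStepC, vrun, fv0, fv1, fv2, fv3, fv4, fv5, ← add_assoc]
        try (push_cast; ring)

lemma close_vcert (i : ℕ) : closeStepC (vcert i) = vmid i := by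
  funext r
  fin_cases r <;> norm_num [closeStepC, vcert, vmid, fv0, fv1, fv2, fv3, fv4, fv5]

lemma dollar_vrun (ε : ℝ) (i n : ℕ) : dollarStepC ε (vrun i n) = vfin ε i n := by
  funext r
  fin_cases r <;>
    · norm_num [dollarStepC, vrun, vfin, fv0, fv1, fv2, fv3, fv4, fv5]
      try (push_cast; ring)

lemma agrees_rho0 : Agrees (rho0 12) vinit := by
  intro i j
  simp only [rho0, Matrix.of_apply, vinit]
  have hi : ((emb i : Fin 12) : ℕ) = (i : ℕ) := rfl
  have hj : ((emb j : Fin 12) : ℕ) = (j : ℕ) := rfl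
  rw [hi, hj]
  by_cases h1 : (i : ℕ) = 0 <;> by_cases h2 : (j : ℕ) = 0 <;> simp [h1, h2]

lemma agrees_foldl (l : ℕ) : ∀ (ρ : Matrix (Fin 12) (Fin 12) ℂ) (v : Fin 6 → ℂ),
    Agrees ρ v →
    Agrees ((List.replicate l ()).foldl (fun ρ (_ : Unit) => symS.app ρ) ρ) (symStepC^[l] v) := by
  induction l with
  | zero => intro ρ v h; simpa using h
  | succ l ih =>
    intro ρ v h
    rw [List.replicate_succ, List.foldl_cons, Function.iterate_succ_apply]
    exact ih _ _ (agrees_symS h)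

/-! ### the machine -/

def M (ε : ℝ) (h0 : 0 ≤ ε) (h1 : ε ≤ 1) : MAPostQFA Unit where
  m := 12
  Eopen := idS
  Eclose := closeS
  Ecent := idS
  Edollar := dollarS ε h0 h1
  Esym := fun _ => symS
  Qacc := {0}
  Qrej := {1}
  disj := by decide

lemma final_agrees (ε : ℝ) (h0 : 0 ≤ ε) (h1 : ε ≤ 1) (i n : ℕ) :
    Agrees ((M ε h0 h1).finalRho (List.replicate i ()) (List.replicate n ())) (vfin ε i n) := by
  rw [MAPostQFA.finalRho]
  show Agrees ((dollarS ε h0 h1).app _) _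
  rw [← dollar_vrun ε i n]
  apply agrees_dollarS
  rw [← iter_run i n]
  have hmid : Agrees (idS.app (closeS.app
      ((List.replicate i ()).foldl (fun ρ (_ : Unit) => symS.app ρ) (idS.app (rho0 12)))))
      (vmid i) := by
    rw [id_app, ← close_vcert i]
    apply agrees_closeS
    rw [← iter_cert i]
    exact agrees_foldl i _ _ (by rw [id_app]; exact agrees_rho0)
  exact agrees_foldl n _ _ hmid

lemma re_sq (x : ℝ) : (((x : ℝ) : ℂ) * (starRingEnd ℂ) ((x : ℝ) : ℂ)).re = x ^ 2 := by
  rw [Complex.conj_ofReal, ← Complex.ofReal_mul, Complex.ofReal_re, sq]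

lemma aPr_eq (ε : ℝ) (h0 : 0 ≤ ε) (h1 : ε ≤ 1) (i n : ℕ) :
    (M ε h0 h1).aPr (List.replicate i ()) (List.replicate n ())
      = (Real.sqrt ε / 2 * γR ^ (i+n)) ^ 2 := by
  rw [MAPostQFA.aPr]
  rw [show (M ε h0 h1).Qacc = ({0} : Finset (Fin 12)) from rfl]
  erw [Finset.sum_singleton]
  have h := final_agrees ε h0 h1 i n 0 0
  rw [show (emb 0 : Fin 12) = 0 from rfl] at h
  rw [h]
  have hv : vfin ε i n 0 = ((Real.sqrt ε / 2 * γR ^ (i+n) : ℝ) : ℂ) := by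
    norm_num [vfin, fv0]
  rw [hv, re_sq]

lemma rPr_eq (ε : ℝ) (h0 : 0 ≤ ε) (h1 : ε ≤ 1) (i n : ℕ) :
    (M ε h0 h1).rPr (List.replicate i ()) (List.replicate n ())
      = (1/2 * ((n:ℝ) - (i:ℝ)^2) * γR ^ (i+n)) ^ 2 := by
  rw [MAPostQFA.rPr]
  rw [show (M ε h0 h1).Qrej = ({1} : Finset (Fin 12)) from rfl]
  erw [Finset.sum_singleton]
  have h := final_agrees ε h0 h1 i n 1 1
  rw [show (emb 1 : Fin 12) = 1 from rfl] at h
  rw [h]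
  have hv : vfin ε i n 1 = ((1/2 * ((n:ℝ) - (i:ℝ)^2) * γR ^ (i+n) : ℝ) : ℂ) := by
    norm_num [vfin, fv1]
  rw [hv, re_sq]


end
end USQ

/-- for every `0 < ε < 1/2` there is a unary MA-PostQFA (certificate and input
alphabet `{a}`) that verifies `USQUARE` with bounded error, with certificates of length `√n`
for members: postselection is always possible, members `a^(i²)` are accepted with probability
exactly 1 on certificate `a^i`, and non-members are rejected with probability `≥ 1−ε` on
every certificate. -/
theorem mapostqfa_usquare (ε : ℝ) (hε0 : 0 < ε) (hε : ε < 1 / 2) :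
    ∃ M : MAPostQFA Unit,
      (∀ i n : ℕ,
        0 < M.aPr (List.replicate i ()) (List.replicate n ()) +
            M.rPr (List.replicate i ()) (List.replicate n ())) ∧
      (∀ i : ℕ, M.accProb (List.replicate i ()) (List.replicate (i ^ 2) ()) = 1) ∧
      (∀ n : ℕ, (¬ ∃ i : ℕ, n = i ^ 2) → ∀ i : ℕ,
        1 - ε ≤ M.rejProb (List.replicate i ()) (List.replicate n ())) := by
  have h0 : (0:ℝ) ≤ ε := hε0.le
  have h1 : ε ≤ 1 := by linarith
  refine ⟨USQ.M ε h0 h1, ?_, ?_, ?_⟩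
  · intro i n
    rw [USQ.aPr_eq, USQ.rPr_eq]
    have hγ : (0:ℝ) < USQ.γR := by norm_num [USQ.γR]
    have hg : 0 < USQ.γR ^ (i+n) := pow_pos hγ _
    have hs : 0 < Real.sqrt ε := Real.sqrt_pos.2 hε0
    have : 0 < (Real.sqrt ε / 2 * USQ.γR ^ (i+n)) ^ 2 := by positivity
    nlinarith [sq_nonneg (1/2 * ((n:ℝ) - (i:ℝ)^2) * USQ.γR ^ (i+n))]
  · intro i
    rw [MAPostQFA.accProb, USQ.aPr_eq, USQ.rPr_eq]
    have hz : ((i^2 : ℕ) : ℝ) - (i:ℝ)^2 = 0 := by push_cast; ring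
    rw [hz]
    have hγ : (0:ℝ) < USQ.γR := by norm_num [USQ.γR]
    have hg : 0 < USQ.γR ^ (i + i^2) := pow_pos hγ _
    have hs : 0 < Real.sqrt ε := Real.sqrt_pos.2 hε0
    have ha : 0 < (Real.sqrt ε / 2 * USQ.γR ^ (i+i^2)) ^ 2 := by positivity
    rw [show (1/2 * (0:ℝ) * USQ.γR ^ (i+i^2))^2 = 0 by ring, add_zero, div_self ha.ne']
  · intro n hn i
    rw [MAPostQFA.rejProb, USQ.aPr_eq, USQ.rPr_eq]
    have hγ : (0:ℝ) < USQ.γR := by norm_num [USQ.γR]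
    have hg : 0 < USQ.γR ^ (i+n) := pow_pos hγ _
    have hsq : Real.sqrt ε ^ 2 = ε := Real.sq_sqrt h0
    set g : ℝ := USQ.γR ^ (i+n) with hgdef
    have hs1 : 1 ≤ ((n:ℝ) - (i:ℝ)^2)^2 := by
      have hz : (n:ℤ) - (i:ℤ)^2 ≠ 0 := by
        intro h
        apply hn
        refine ⟨i, ?_⟩
        have hni : (n:ℤ) = ((i^2 : ℕ) : ℤ) := by push_cast; linarith
        exact_mod_cast hni
      have h1' : 1 ≤ |(n:ℤ) - (i:ℤ)^2| := Int.one_le_abs hz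
      have h2' : 1 ≤ ((n:ℤ) - (i:ℤ)^2)^2 := by nlinarith [abs_nonneg ((n:ℤ) - (i:ℤ)^2), sq_abs ((n:ℤ) - (i:ℤ)^2)]
      have : ((1:ℤ):ℝ) ≤ ((((n:ℤ) - (i:ℤ)^2)^2 : ℤ) : ℝ) := by exact_mod_cast h2'
      push_cast at this
      convert this using 2
    set s : ℝ := ((n:ℝ) - (i:ℝ)^2)^2 with hsdef
    have haval : (Real.sqrt ε / 2 * g) ^ 2 = ε / 4 * g^2 := by
      rw [div_mul_eq_mul_div, div_pow, mul_pow, hsq]; ring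
    have hrval : (1/2 * ((n:ℝ) - (i:ℝ)^2) * g) ^ 2 = s / 4 * g^2 := by
      rw [hsdef]; ring
    rw [haval, hrval]
    have hg2 : 0 < g^2 := by positivity
    have hden : 0 < ε / 4 * g^2 + s / 4 * g^2 := by nlinarith
    rw [le_div_iff₀ hden]
    nlinarith [mul_pos hg2 hε0, hs1, hg2]
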